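/- arXiv:1206.0455 — 2 statements merged into one kernel-verified Lean document; each statement's English description precedes it below -/
import Mathlib

section
/- The kernel of the F-linear map ψ ↦ ψ_{s,t} on F[λ,λ⁻¹] is exactly Fλ^s + Fλ^t. -/
open LaurentPolynomial

noncomputable section

/-- The Laurent polynomial `ψ(c·λ)`. -/
noncomputable def lscale {F : Type*} [Field F] (c : F) (ψ : LaurentPolynomial F) :
    LaurentPolynomial F :=
  Finsupp.sum ψ.coeff fun i a => (a * c ^ i) • (T i : LaurentPolynomial F)

/-- The map `ψ ↦ ψ_{s,t}` of Definition 2.4: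
`ψ_{s,t}(λ) = ψ(q⁻¹λ) − (q^{−2s}+q^{−2t})ψ(qλ) + q^{−2s−2t}ψ(q³λ)`. -/
noncomputable def adu {F : Type*} [Field F] (q : F) (s t : ℤ) (ψ : LaurentPolynomial F) :
    LaurentPolynomial F :=
  lscale q⁻¹ ψ - (q ^ (-2*s) + q ^ (-2*t)) • lscale q ψ + q ^ (-2*s-2*t) • lscale (q^3) ψ

/-- `F[λ,λ⁻¹]_{s,t}`: the span of the monomials `λ^i`, `i ∉ {s,t}`. -/
noncomputable def lstSpan (F : Type*) [Field F] (s t : ℤ) :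
    Submodule F (LaurentPolynomial F) :=
  Submodule.span F {ψ : LaurentPolynomial F | ∃ i : ℤ, i ≠ s ∧ i ≠ t ∧ ψ = T i}

/-- `x^i` for `i : ℤ`, interpreting negative powers via a designated inverse `y`. -/
def zpow2 {B : Type*} [Monoid B] (x y : B) (i : ℤ) : B :=
  if 0 ≤ i then x ^ i.toNat else y ^ (-i).toNat

/-- Evaluation `ψ(c·x)` of a Laurent polynomial `ψ`, where `y` plays the role of `x⁻¹`. -/
noncomputable def leval {F : Type*} [Field F] {B : Type*} [Ring B] [Algebra F B]
    (ψ : LaurentPolynomial F) (c : F) (x y : B) : B :=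
  Finsupp.sum ψ.coeff fun i a => (a * c ^ i) • zpow2 x y i


-- auxiliary lemmas
lemma smul_T_apply' {F : Type*} [Field F] (a : F) (i n : ℤ) :
    (a • (T i : LaurentPolynomial F)).coeff n = if i = n then a else 0 := by
  rw [AddMonoidAlgebra.coeff_smul, Finsupp.smul_apply, T_apply, smul_ite, smul_eq_mul, mul_one, smul_zero]

lemma lscale_apply' {F : Type*} [Field F] (c : F) (ψ : LaurentPolynomial F) (n : ℤ) :
    (lscale c ψ).coeff n = ψ.coeff n * c ^ n := by
  rw [lscale, Finsupp.sum, AddMonoidAlgebra.coeff_sum, Finsupp.finset_sum_apply]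
  simp only [smul_T_apply']
  rw [Finset.sum_ite_eq' ψ.coeff.support n]
  split_ifs with h
  · rfl
  · rw [Finsupp.notMem_support_iff.mp h, zero_mul]

/-- the eigenvalue of `adu` on `T n` -/
def aduMu {F : Type*} [Field F] (q : F) (s t n : ℤ) : F :=
  q^(-n) - (q^(-2*s)+q^(-2*t)) * q^n + q^(-2*s-2*t) * q^(3*n)

lemma adu_apply' {F : Type*} [Field F] (q : F) (s t : ℤ) (ψ : LaurentPolynomial F) (n : ℤ) :
    (adu q s t ψ).coeff n = ψ.coeff n * aduMu q s t n := by
  rw [adu, AddMonoidAlgebra.coeff_add, AddMonoidAlgebra.coeff_sub, AddMonoidAlgebra.coeff_smul,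
    AddMonoidAlgebra.coeff_smul, Finsupp.add_apply, Finsupp.sub_apply, Finsupp.smul_apply, Finsupp.smul_apply,
    lscale_apply', lscale_apply', lscale_apply', smul_eq_mul, smul_eq_mul, aduMu,
    inv_zpow, ← zpow_neg, ← zpow_natCast q 3, ← zpow_mul]
  norm_num
  ring

lemma aduMu_key {F : Type*} [Field F] (q : F) (hq0 : q ≠ 0) (s t n : ℤ) :
    q ^ n * aduMu q s t n = (1 - q^(2*(n-s))) * (1 - q^(2*(n-t))) := by
  have h : ∀ a b : ℤ, q^a * q^b = q^(a+b) := fun a b => (zpow_add₀ hq0 a b).symm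
  have h2 : ∀ m : ℤ, (q^m)^(2:ℕ) = q^(m*2) := by
    intro m; rw [← zpow_natCast (q^m), ← zpow_mul]; norm_num
  rw [aduMu]
  ring_nf
  rw [h, h, h, h]
  ring_nf
  rw [zpow_zero]
  ring_nf
  rw [h2, h, h, show n*2 + -(s*2) = n*2 - s*2 by ring, show n*2 + -(t*2) = n*2 - t*2 by ring]

lemma zpow_eq_one_iff' {F : Type*} [Field F] (q : F) (hq0 : q ≠ 0)
    (hq : ∀ n : ℕ, 0 < n → q ^ n ≠ 1) (k : ℤ) : q ^ k = 1 ↔ k = 0 := by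
  constructor
  · intro hk
    by_contra hk0
    rcases lt_or_gt_of_ne hk0 with h | h
    · have h1 : q ^ (-k) = 1 := by rw [zpow_neg, hk, inv_one]
      have h2 := hq (-k).toNat (by omega)
      rw [← zpow_natCast q, Int.toNat_of_nonneg (by omega)] at h2
      exact h2 h1
    · have h2 := hq k.toNat (by omega)
      rw [← zpow_natCast q, Int.toNat_of_nonneg (by omega)] at h2
      exact h2 hk
  · rintro rfl; exact zpow_zero q

lemma aduMu_eq_zero_iff {F : Type*} [Field F] (q : F) (hq0 : q ≠ 0)
    (hq : ∀ n : ℕ, 0 < n → q ^ n ≠ 1) (s t n : ℤ) :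
    aduMu q s t n = 0 ↔ n = s ∨ n = t := by
  have hn : q ^ n ≠ 0 := zpow_ne_zero n hq0
  have h1 : aduMu q s t n = 0 ↔ q ^ n * aduMu q s t n = 0 := by
    rw [mul_eq_zero]; tauto
  rw [h1, aduMu_key q hq0, mul_eq_zero, sub_eq_zero, sub_eq_zero, eq_comm (a := (1:F)),
    eq_comm (a := (1:F)), zpow_eq_one_iff' q hq0 hq, zpow_eq_one_iff' q hq0 hq]
  omega

theorem stmt4 {F : Type*} [Field F] (q : F) (hq0 : q ≠ 0)
    (hq : ∀ n : ℕ, 0 < n → q ^ n ≠ 1) (s t : ℤ) (hst : s ≠ t) :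
    {ψ : LaurentPolynomial F | adu q s t ψ = 0}
      = (Submodule.span F {(T s : LaurentPolynomial F), T t} : Set (LaurentPolynomial F)) := by
  ext ψ
  simp only [Set.mem_setOf_eq, SetLike.mem_coe, Submodule.mem_span_pair]
  constructor
  · intro h
    refine ⟨ψ.coeff s, ψ.coeff t, ?_⟩
    apply LaurentPolynomial.ext
    intro n
    rw [AddMonoidAlgebra.coeff_add, Finsupp.add_apply, smul_T_apply', smul_T_apply']
    by_cases hns : n = s
    · subst hns
      simp [Ne.symm hst]
    · by_cases hnt : n = t
      · subst hnt
        simp [hst]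
      · have hcn : (adu q s t ψ).coeff n = (0 : LaurentPolynomial F).coeff n := by rw [h]
        rw [adu_apply', AddMonoidAlgebra.coeff_zero, Finsupp.zero_apply] at hcn
        have hmu : aduMu q s t n ≠ 0 := by
          rw [Ne, aduMu_eq_zero_iff q hq0 hq]
          tauto
        have hψ : ψ.coeff n = 0 := by
          rcases mul_eq_zero.mp hcn with h' | h'
          · exact h'
          · exact absurd h' hmu
        simp [Ne.symm hns, Ne.symm hnt, hψ]
  · rintro ⟨a, b, rfl⟩
    apply LaurentPolynomial.ext
    intro n
    rw [adu_apply', AddMonoidAlgebra.coeff_zero, Finsupp.zero_apply]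
    by_cases hn : n = s ∨ n = t
    · rw [(aduMu_eq_zero_iff q hq0 hq s t n).mpr hn, mul_zero]
    · push_neg at hn
      rw [AddMonoidAlgebra.coeff_add, Finsupp.add_apply, smul_T_apply', smul_T_apply', if_neg (Ne.symm hn.1),
        if_neg (Ne.symm hn.2), add_zero, zero_mul]

end
end

section
/- The image of the F-linear map ψ ↦ ψ_{s,t} on F[λ,λ⁻¹] is exactly the subspace F[λ,λ⁻¹]_{s,t} = Span{λ^i : i ≠ s, i ≠ t}. -/
open LaurentPolynomial

noncomputable section

/-- linear map version of lscale -/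
noncomputable def lscaleL {F : Type*} [Field F] (c : F) :
    LaurentPolynomial F →ₗ[F] LaurentPolynomial F :=
  (Finsupp.lsum F fun i => LinearMap.toSpanSingleton F _ (c ^ i • T i)) ∘ₗ
    (AddMonoidAlgebra.coeffLinearEquiv F).toLinearMap

lemma lscaleL_apply {F : Type*} [Field F] (c : F) (ψ : LaurentPolynomial F) :
    lscaleL c ψ = lscale c ψ := by
  rw [lscaleL, LinearMap.comp_apply]; erw [Finsupp.lsum_apply]; rw [lscale, Finsupp.sum]
  exact Finset.sum_congr rfl fun i _ => by
    rw [LinearMap.toSpanSingleton_apply, smul_smul]; rfl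

noncomputable def aduL {F : Type*} [Field F] (q : F) (s t : ℤ) :
    LaurentPolynomial F →ₗ[F] LaurentPolynomial F :=
  lscaleL q⁻¹ - (q ^ (-2*s) + q ^ (-2*t)) • lscaleL q + q ^ (-2*s-2*t) • lscaleL (q^3)

lemma aduL_apply {F : Type*} [Field F] (q : F) (s t : ℤ) (ψ : LaurentPolynomial F) :
    aduL q s t ψ = adu q s t ψ := by
  simp [aduL, adu, lscaleL_apply]

lemma lscale_T {F : Type*} [Field F] (c : F) (n : ℤ) :
    lscale c (T n : LaurentPolynomial F) = c ^ n • T n := by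
  rw [lscale, T, AddMonoidAlgebra.coeff_single, Finsupp.sum_single_index] <;> simp

/-- the eigenvalue -/
noncomputable def cf {F : Type*} [Field F] (q : F) (s t n : ℤ) : F :=
  q⁻¹ ^ n - (q ^ (-2*s) + q ^ (-2*t)) * q ^ n + q ^ (-2*s-2*t) * (q^3) ^ n

lemma adu_T {F : Type*} [Field F] (q : F) (s t n : ℤ) :
    adu q s t (T n : LaurentPolynomial F) = cf q s t n • T n := by
  rw [adu, lscale_T, lscale_T, lscale_T, cf, smul_smul, smul_smul]
  module

lemma cf_factor {F : Type*} [Field F] (q : F) (hq0 : q ≠ 0) (s t n : ℤ) :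
    cf q s t n = q ^ (-n) * ((1 - q ^ (2*(n-s))) * (1 - q ^ (2*(n-t)))) := by
  rw [cf, inv_zpow, ← zpow_neg]
  simp only [mul_sub, sub_mul, one_mul, mul_one, ← zpow_natCast, ← zpow_mul, ← zpow_add₀ hq0]
  ring_nf
  simp only [← zpow_add₀ hq0]
  ring_nf

lemma zroot {F : Type*} [Field F] (q : F)
    (hq : ∀ n : ℕ, 0 < n → q ^ n ≠ 1) (m : ℤ) (hm : m ≠ 0) : q ^ m ≠ 1 := by
  rcases lt_trichotomy m 0 with h | h | h
  · intro h1
    have h2 : q ^ (-m) = 1 := by rw [zpow_neg, h1, inv_one]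
    have h3 := hq (-m).toNat (by omega)
    rw [← zpow_natCast, Int.toNat_of_nonneg (by omega)] at h3
    exact h3 h2
  · exact absurd h hm
  · intro h1
    have h3 := hq m.toNat (by omega)
    rw [← zpow_natCast, Int.toNat_of_nonneg h.le] at h3
    exact h3 h1

lemma cf_ne {F : Type*} [Field F] (q : F) (hq0 : q ≠ 0)
    (hq : ∀ n : ℕ, 0 < n → q ^ n ≠ 1) (s t n : ℤ) (hns : n ≠ s) (hnt : n ≠ t) :
    cf q s t n ≠ 0 := by
  rw [cf_factor q hq0]
  exact mul_ne_zero (zpow_ne_zero _ hq0) (mul_ne_zero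
    (sub_ne_zero.mpr (Ne.symm (zroot q hq _ (by omega))))
    (sub_ne_zero.mpr (Ne.symm (zroot q hq _ (by omega)))))


theorem stmt5 {F : Type*} [Field F] (q : F) (hq0 : q ≠ 0)
    (hq : ∀ n : ℕ, 0 < n → q ^ n ≠ 1) (s t : ℤ) (hst : s ≠ t) :
    Set.range (adu q s t) = (lstSpan F s t : Set (LaurentPolynomial F)) := by
  have hfun : adu q s t = ⇑(aduL q s t) := funext fun ψ => (aduL_apply q s t ψ).symm
  suffices h : LinearMap.range (aduL q s t) = lstSpan F s t by
    rw [hfun, ← LinearMap.coe_range, h]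
  apply le_antisymm
  · rintro x ⟨ψ, rfl⟩
    induction ψ using AddMonoidAlgebra.induction_linear with
    | zero => simp
    | add f g hf hg => rw [map_add]; exact add_mem hf hg
    | single n a =>
      have h1 : (AddMonoidAlgebra.single n a : LaurentPolynomial F) = a • T n := by
        rw [T, AddMonoidAlgebra.smul_single, smul_eq_mul, mul_one]
      rw [h1, map_smul]
      apply Submodule.smul_mem
      rw [show aduL q s t (T n) = cf q s t n • T n by rw [aduL_apply, adu_T]]
      by_cases hns : n = s
      · subst hns
        rw [cf_factor q hq0]
        simp
      by_cases hnt : n = t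
      · subst hnt
        rw [cf_factor q hq0]
        simp
      · exact Submodule.smul_mem _ _ (Submodule.subset_span ⟨n, hns, hnt, rfl⟩)
  · rw [lstSpan, Submodule.span_le]
    rintro _ ⟨i, his, hit, rfl⟩
    exact ⟨(cf q s t i)⁻¹ • T i, by
      rw [map_smul, aduL_apply, adu_T, smul_smul,
        inv_mul_cancel₀ (cf_ne q hq0 hq s t i his hit), one_smul]⟩

end
end
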